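/- Let Δ ⊂ ℝⁿ be a compact convex polytope with 0 in its interior, and let B : Δ → ℝ be a nonnegative convex continuous function with ∫_Δ B = 1, ∫_Δ y_i B = 0 for all i, and ∫_Δ B² = B(0). Then B is affine on the convex hull of the set {B > 0}, the set {y ∈ Δ : B(y) > 0} is convex, and consequently B = max{0, h} for some affine function h on ℝⁿ (i.e. B is a simple convex function). -/

import Mathlib

open MeasureTheory Set

/-- Points of a convex set lie in the closure of the interior, provided the
interior is nonempty. -/
theorem mem_closure_interior_of_convex' {E : Type*} [NormedAddCommGroup E] [NormedSpace ℝ E]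
    {s : Set E} (hs : Convex ℝ s) {x z : E} (hx : x ∈ s) (hz : z ∈ interior s) :
    x ∈ closure (interior s) := by
  have h : Filter.Tendsto (fun t : ℝ => (1 - t) • x + t • z) (nhdsWithin 0 (Ioi 0)) (nhds x) := by
    have h2 : Continuous (fun t : ℝ => (1 - t) • x + t • z) := by continuity
    have := h2.tendsto 0
    simp only [sub_zero, one_smul, zero_smul, add_zero] at this
    exact this.mono_left nhdsWithin_le_nhds
  refine mem_closure_of_tendsto h ?_
  have hlt : ∀ᶠ t in nhdsWithin (0:ℝ) (Ioi 0), t < 1 :=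
    Filter.eventually_iff_exists_mem.mpr
      ⟨Iio 1, nhdsWithin_le_nhds (Iio_mem_nhds one_pos), fun t ht => ht⟩
  filter_upwards [self_mem_nhdsWithin, hlt] with t ht ht1
  exact hs.combo_self_interior_mem_interior hx hz (by linarith [mem_Ioi.mp ht])
    (mem_Ioi.mp ht) (by ring)

/-- A nonnegative convex continuous balancing function `B` on `Δ` with
`∫_Δ B² = B(0)` is affine on the convex hull of `{B > 0}`, the set
`{y ∈ Δ | B(y) > 0}` is convex, and `B = max{0, h}` on `Δ` for some affine
function `h` (i.e. `B` is a simple convex function). -/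
theorem balancing_is_simple {n : ℕ} (Δ : Set (Fin n → ℝ))
    (hΔc : IsCompact Δ) (hΔconv : Convex ℝ Δ)
    (h0 : (0 : Fin n → ℝ) ∈ interior Δ)
    (B : (Fin n → ℝ) → ℝ)
    (hBconv : ConvexOn ℝ Δ B) (hBcont : ContinuousOn B Δ)
    (hBpos : ∀ y ∈ Δ, 0 ≤ B y)
    (hB1 : ∫ y in Δ, B y = 1)
    (hBm : ∀ i : Fin n, ∫ y in Δ, y i * B y = 0)
    (hBsq : ∫ y in Δ, (B y) ^ 2 = B 0) :
    (∃ a : Fin n → ℝ, ∃ c : ℝ,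
      ∀ y ∈ convexHull ℝ {y ∈ Δ | 0 < B y}, B y = (∑ i, a i * y i) + c) ∧
    Convex ℝ {y ∈ Δ | 0 < B y} ∧
    (∃ a : Fin n → ℝ, ∃ c : ℝ,
      ∀ y ∈ Δ, B y = max 0 ((∑ i, a i * y i) + c)) := by
  classical
  have hΔmeas : MeasurableSet Δ := hΔc.isClosed.measurableSet
  have hΔsub : ∀ x ∈ Δ, x ∈ closure (interior Δ) :=
    fun x hx => mem_closure_interior_of_convex' hΔconv hx h0
  obtain ⟨M, hM⟩ := hΔc.exists_bound_of_continuousOn hBcont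
  -- epigraph
  set K : Set ((Fin n → ℝ) × ℝ) := {p | p.1 ∈ Δ ∧ B p.1 ≤ p.2} with hKdef
  have hK : Convex ℝ K := hBconv.convex_epigraph
  have hbox : (interior Δ) ×ˢ (Ioi M) ⊆ interior K := by
    apply interior_maximal _ (isOpen_interior.prod isOpen_Ioi)
    rintro ⟨x, t⟩ ⟨hx, ht⟩
    refine ⟨interior_subset hx, ?_⟩
    have := hM x (interior_subset hx)
    rw [Real.norm_eq_abs] at this
    have := le_abs_self (B x)
    exact le_of_lt (lt_of_le_of_lt (by linarith [abs_le.mp (hM x (interior_subset hx))]) ht)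
  have hpK : ((0 : Fin n → ℝ), B 0) ∈ K := ⟨interior_subset h0, le_refl _⟩
  have hpnot : ((0 : Fin n → ℝ), B 0) ∉ interior K := by
    intro hp
    rw [mem_interior_iff_mem_nhds, Metric.mem_nhds_iff] at hp
    obtain ⟨ε, hε, hball⟩ := hp
    have hq : ((0 : Fin n → ℝ), B 0 - ε / 2) ∈ Metric.ball ((0 : Fin n → ℝ), B 0) ε := by
      rw [Metric.mem_ball, Prod.dist_eq]
      have h1 : dist ((0 : Fin n → ℝ)) 0 = 0 := by simp
      have h2 : dist (B 0 - ε / 2) (B 0) = ε / 2 := by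
        rw [Real.dist_eq, show B 0 - ε / 2 - B 0 = -(ε / 2) by ring, abs_neg,
          abs_of_nonneg (by linarith)]
      rw [h1, h2, max_eq_right (by linarith)]
      linarith
    have := (hball hq).2
    simp only at this
    linarith
  obtain ⟨f, hf⟩ := geometric_hahn_banach_open_point hK.interior isOpen_interior hpnot
  -- decompose f
  have hsplit : ∀ (x : Fin n → ℝ) (t : ℝ), f (x, t) = f (x, 0) + t * f (0, 1) := by
    intro x t
    have hd : ((x, t) : (Fin n → ℝ) × ℝ) = (x, (0:ℝ)) + t • ((0 : Fin n → ℝ), (1:ℝ)) := by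
      ext <;> simp
    rw [hd, map_add, f.map_smul, smul_eq_mul]
  set β : ℝ := f ((0 : Fin n → ℝ), (1:ℝ)) with hβdef
  have hf00 : f ((0 : Fin n → ℝ), (0:ℝ)) = 0 := by
    have : ((0 : Fin n → ℝ), (0:ℝ)) = (0 : (Fin n → ℝ) × ℝ) := rfl
    rw [this, map_zero]
  have hβ : β < 0 := by
    set T := max M (B 0) + 1 with hT
    have h1 : ((0 : Fin n → ℝ), T) ∈ interior K :=
      hbox ⟨h0, by simp only [mem_Ioi, hT]; linarith [le_max_left M (B 0)]⟩
    have h2 := hf _ h1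
    rw [hsplit 0 T, hsplit 0 (B 0), hf00] at h2
    have hTB : B 0 < T := by simp only [hT]; linarith [le_max_right M (B 0)]
    nlinarith
  have hβne : β ≠ 0 := ne_of_lt hβ
  have hfle : ∀ a ∈ K, f a ≤ f ((0 : Fin n → ℝ), B 0) := by
    intro q hq
    have hz : ((0 : Fin n → ℝ), max M (B 0) + 1) ∈ interior K :=
      hbox ⟨h0, by simp only [mem_Ioi]; linarith [le_max_left M (B 0)]⟩
    have hcl : q ∈ closure (interior K) := mem_closure_interior_of_convex' hK hq hz
    have hsub : closure (interior K) ⊆ {x | f x ≤ f ((0 : Fin n → ℝ), B 0)} :=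
      closure_minimal (fun x hx => (hf x hx).le)
        (isClosed_le f.continuous continuous_const)
    exact hsub hcl
  -- the supporting affine function
  set L : (Fin n → ℝ) → ℝ := fun x => B 0 - f (x, 0) / β with hLdef
  have hle : ∀ x ∈ Δ, L x ≤ B x := by
    intro x hx
    have hkey := hfle (x, B x) ⟨hx, le_refl _⟩
    rw [hsplit x (B x), hsplit 0 (B 0), hf00] at hkey
    have hc : f (x, 0) / β * β = f (x, 0) := div_mul_cancel₀ _ hβne
    simp only [hLdef]
    nlinarith
  have haffF : ∀ (x y : Fin n → ℝ) (a b : ℝ),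
      f ((a • x + b • y : Fin n → ℝ), (0:ℝ)) = a * f (x, 0) + b * f (y, 0) := by
    intro x y a b
    have hd : ((a • x + b • y : Fin n → ℝ), (0:ℝ))
        = a • ((x, (0:ℝ))) + b • ((y, (0:ℝ))) := by ext <;> simp
    rw [hd, map_add, f.map_smul, f.map_smul, smul_eq_mul, smul_eq_mul]
  have haff : ∀ (x y : Fin n → ℝ) (a b : ℝ), a + b = 1 →
      L (a • x + b • y) = a * L x + b * L y := by
    intro x y a b hab
    simp only [hLdef]
    rw [haffF]
    have : a * (B 0 - f (x, 0) / β) + b * (B 0 - f (y, 0) / β)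
        = (a + b) * B 0 - (a * f (x, 0) + b * f (y, 0)) / β := by
      field_simp
      ring
    rw [this, hab, one_mul]
  -- coordinates of L
  set e : Fin n → (Fin n → ℝ) := fun i => fun j => if i = j then (1:ℝ) else 0 with hedef
  set a : Fin n → ℝ := fun i => -(f (e i, 0)) / β with hadef
  have hrepr : ∀ y : Fin n → ℝ, L y = (∑ i, a i * y i) + B 0 := by
    intro y
    have hy : ((y, (0:ℝ)) : (Fin n → ℝ) × ℝ) = ∑ i, y i • ((e i : Fin n → ℝ), (0:ℝ)) := by
      apply Prod.ext
      · rw [Prod.fst_sum]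
        simp only [Prod.smul_mk]
        exact pi_eq_sum_univ y
      · rw [Prod.snd_sum]
        simp
    have hfy : f (y, 0) = ∑ i, y i * f (e i, 0) := by
      rw [hy, map_sum]
      refine Finset.sum_congr rfl fun i _ => ?_
      rw [f.map_smul, smul_eq_mul]
    have hsum : (∑ i, a i * y i) = -((∑ i, y i * f (e i, 0)) / β) := by
      rw [Finset.sum_div, ← Finset.sum_neg_distrib]
      exact Finset.sum_congr rfl fun i _ => by simp only [hadef]; ring
    simp only [hLdef]
    rw [hfy, hsum]
    ring
  -- continuity and integrability
  have hLcont : Continuous L := by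
    have h1 : Continuous fun x : Fin n → ℝ => f (x, (0:ℝ)) :=
      f.continuous.comp (continuous_id.prodMk continuous_const)
    simpa only [hLdef] using (show Continuous fun x => B 0 - f (x, 0) / β from continuous_const.sub (h1.div_const β))
  have intB : IntegrableOn B Δ := hBcont.integrableOn_compact hΔc
  have intYB : ∀ i, IntegrableOn (fun y => y i * B y) Δ := fun i =>
    (((continuous_apply i).continuousOn).mul hBcont).integrableOn_compact hΔc
  have intB2 : IntegrableOn (fun y => (B y) ^ 2) Δ :=
    (hBcont.pow 2).integrableOn_compact hΔc
  have intLB : IntegrableOn (fun y => L y * B y) Δ :=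
    (hLcont.continuousOn.mul hBcont).integrableOn_compact hΔc
  have intFB : IntegrableOn (fun y => (B y - L y) * B y) Δ :=
    ((hBcont.sub hLcont.continuousOn).mul hBcont).integrableOn_compact hΔc
  -- ∫ L·B = B 0
  have hintLB : ∫ y in Δ, L y * B y = B 0 := by
    have hptw : ∀ y : Fin n → ℝ, L y * B y = (∑ i, a i * (y i * B y)) + B 0 * B y := by
      intro y
      rw [hrepr y, add_mul, Finset.sum_mul]
      congr 1
      exact Finset.sum_congr rfl fun i _ => by ring
    simp_rw [hptw]
    rw [integral_add (integrable_finset_sum _ fun i _ => (intYB i).const_mul _)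
      (intB.const_mul _)]
    rw [integral_finset_sum _ fun i _ => (intYB i).const_mul _]
    simp_rw [integral_const_mul]
    simp [hBm, hB1]
  have hzero : ∫ y in Δ, (B y - L y) * B y = 0 := by
    have hptw : ∀ y : Fin n → ℝ, (B y - L y) * B y = (B y) ^ 2 - L y * B y :=
      fun y => by ring
    simp_rw [hptw]
    rw [integral_sub intB2 intLB, hBsq, hintLB, sub_self]
  have hae : (fun y => (B y - L y) * B y) =ᵐ[volume.restrict Δ] 0 :=
    (integral_eq_zero_iff_of_nonneg_ae
      (ae_restrict_of_forall_mem hΔmeas fun y hy =>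
        mul_nonneg (sub_nonneg.2 (hle y hy)) (hBpos y hy))
      intFB).mp hzero
  -- pointwise equality on {B > 0}
  have hpt : ∀ y ∈ Δ, 0 < B y → B y = L y := by
    intro y hy hBy
    by_contra hne
    set F : (Fin n → ℝ) → ℝ := fun x => (B x - L x) * B x with hFdef
    have hFy : 0 < F y := by
      refine mul_pos (lt_of_le_of_ne (sub_nonneg.2 (hle y hy)) ?_) hBy
      intro hc
      exact hne (sub_eq_zero.mp hc.symm)
    have hFc : ContinuousOn F Δ := (hBcont.sub hLcont.continuousOn).mul hBcont
    have hev : F ⁻¹' (Ioi (F y / 2)) ∈ nhdsWithin y Δ :=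
      (hFc y hy) (Ioi_mem_nhds (by linarith))
    obtain ⟨U, hUo, hyU, hU⟩ := mem_nhdsWithin.mp hev
    have hnull : volume.restrict Δ {x | F x ≠ 0} = 0 := by
      have h1 := hae
      rw [Filter.EventuallyEq, ae_iff] at h1
      simpa using h1
    have hsub2 : U ∩ Δ ⊆ {x | F x ≠ 0} := by
      intro x hx
      have := hU hx
      simp only [mem_preimage, mem_Ioi] at this
      exact ne_of_gt (lt_trans (by linarith) this)
    have h0' : volume.restrict Δ (U ∩ Δ) = 0 := measure_mono_null hsub2 hnull
    have hpos : 0 < volume.restrict Δ (U ∩ Δ) := by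
      rw [Measure.restrict_apply (hUo.measurableSet.inter hΔmeas)]
      have hne2 : (U ∩ interior Δ).Nonempty :=
        mem_closure_iff.mp (hΔsub y hy) U hUo hyU
      calc (0 : ENNReal) < volume (U ∩ interior Δ) :=
            (hUo.inter isOpen_interior).measure_pos volume hne2
        _ ≤ volume ((U ∩ Δ) ∩ Δ) := measure_mono
            (fun x hx => ⟨⟨hx.1, interior_subset hx.2⟩, interior_subset hx.2⟩)
    exact absurd h0' (ne_of_gt hpos)
  -- convexity of the sublevel set of B - L
  have hconc : ConcaveOn ℝ Δ L := by
    refine ⟨hΔconv, fun x hx y hy p q hp hq hpq => le_of_eq ?_⟩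
    rw [haff x y p q hpq, smul_eq_mul, smul_eq_mul]
  have hsubconv : Convex ℝ {x | x ∈ Δ ∧ (B - L) x ≤ 0} := (hBconv.sub hconc).convex_le 0
  have hhull : convexHull ℝ {y ∈ Δ | 0 < B y} ⊆ {x | x ∈ Δ ∧ (B - L) x ≤ 0} := by
    refine convexHull_min ?_ hsubconv
    intro x hx
    refine ⟨hx.1, ?_⟩
    have := hpt x hx.1 hx.2
    simp [Pi.sub_apply, this]
  have heqhull : ∀ y ∈ convexHull ℝ {y ∈ Δ | 0 < B y}, B y = L y := by
    intro y hy
    refine le_antisymm ?_ (hle y (hhull hy).1)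
    have := (hhull hy).2
    simpa [Pi.sub_apply, sub_nonpos] using this
  refine ⟨⟨a, B 0, fun y hy => by rw [heqhull y hy, hrepr y]⟩, ?_, ?_⟩
  · -- convexity of {B > 0}
    intro y1 hy1 y2 hy2 p q hp hq hpq
    refine ⟨hΔconv hy1.1 hy2.1 hp hq hpq, ?_⟩
    have hmem : p • y1 + q • y2 ∈ convexHull ℝ {y ∈ Δ | 0 < B y} :=
      (convex_convexHull ℝ _) (subset_convexHull ℝ _ hy1) (subset_convexHull ℝ _ hy2)
        hp hq hpq
    rw [heqhull _ hmem, haff y1 y2 p q hpq, ← hpt y1 hy1.1 hy1.2, ← hpt y2 hy2.1 hy2.2]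
    rcases eq_or_lt_of_le hp with h' | h'
    · have hq1 : q = 1 := by linarith
      rw [← h', hq1]
      simpa using hy2.2
    · have := mul_pos h' hy1.2
      nlinarith [mul_nonneg hq (le_of_lt hy2.2)]
  · -- B = max 0 L on Δ
    refine ⟨a, B 0, fun y hy => ?_⟩
    rw [← hrepr y]
    rcases lt_or_eq_of_le (hBpos y hy) with hposB | hzeroB
    · have heq := hpt y hy hposB
      rw [← heq, max_eq_right (hBpos y hy)]
    · have hh : L y ≤ 0 := by
        have := hle y hy
        linarith
      rw [max_eq_left hh, ← hzeroB]
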